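/- Let n ≤ m, let C ⊆ F_{q^m}^n be an F_{q^m}-linear vector rank-metric code, let Γ be a basis of F_{q^m} over F_q, and let Γ(C) ⊆ Mat_{n×m}(F_q) be the associated rank-metric code. Then C is MRD (i.e. dim_{F_{q^m}}(C) = n − d_min(C) + 1) if and only if Γ(C) is MRD (i.e. dim_{F_q}(Γ(C)) = m·(n − d_min(Γ(C)) + 1)). -/

import Mathlib

open Matrix

/-- The rank weight of `v : Fqm^n`: the dimension over `Fq` of the `Fq`-span of its entries. -/
noncomputable def rkw (Fq : Type*) [Field Fq] {Fqm : Type*} [Field Fqm] [Algebra Fq Fqm]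
    {n : ℕ} (v : Fin n → Fqm) : ℕ :=
  Module.finrank Fq (Submodule.span Fq (Set.range v))

open scoped Classical in
/-- Minimum distance of a vector rank-metric code. -/
noncomputable def dminVec (Fq : Type*) [Field Fq] {Fqm : Type*} [Field Fqm] [Algebra Fq Fqm]
    {n : ℕ} (C : Submodule Fqm (Fin n → Fqm)) : ℕ :=
  if C = ⊥ then n + 1 else sInf {r : ℕ | ∃ v ∈ C, v ≠ 0 ∧ rkw Fq v = r}

open scoped Classical in
/-- Minimum distance of a matrix rank-metric code. -/
noncomputable def dminMat {Fq : Type*} [Field Fq] {n m : ℕ}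
    (C : Submodule Fq (Matrix (Fin n) (Fin m) Fq)) : ℕ :=
  if C = ⊥ then min m n + 1
  else sInf {r : ℕ | ∃ M ∈ C, M ≠ 0 ∧ M.rank = r}

/-- The `Fq`-linear map `v ↦ Γ(v)` from `Fqm^n` to `n × m` matrices over `Fq`,
where `Γ(v) i j` is the `j`-th coordinate of `v i` in the basis `Γ`. -/
noncomputable def gammaLin {Fq Fqm : Type*} [Field Fq] [Field Fqm] [Algebra Fq Fqm]
    {n m : ℕ} (Γ : Module.Basis (Fin m) Fq Fqm) :
    (Fin n → Fqm) →ₗ[Fq] Matrix (Fin n) (Fin m) Fq where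
  toFun v := Matrix.of fun i j => Γ.repr (v i) j
  map_add' v w := by ext i j; simp
  map_smul' c v := by ext i j; simp

section Aux

variable {Fq Fqm : Type*} [Field Fq] [Field Fqm] [Algebra Fq Fqm]
  {n m : ℕ} (Γ : Module.Basis (Fin m) Fq Fqm)

lemma gammaLin_injective : Function.Injective (gammaLin (n := n) Γ) := by
  intro v w h
  funext i
  have := congrFun (congrFun h i)
  apply Γ.repr.injective
  ext j
  exact this j

lemma rank_gammaLin (v : Fin n → Fqm) : (gammaLin Γ v).rank = rkw Fq v := by
  rw [Matrix.rank_eq_finrank_span_row]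
  have key : Submodule.span Fq (Set.range (gammaLin Γ v).row) =
      Submodule.map (Γ.equivFun : Fqm →ₗ[Fq] (Fin m → Fq)) (Submodule.span Fq (Set.range v)) := by
    rw [Submodule.map_span]
    congr 1
    rw [← Set.range_comp]
    congr 1
  rw [key, rkw]
  exact LinearEquiv.finrank_map_eq Γ.equivFun _

end Aux

/-- For `n ≤ m`, a vector rank-metric code `C` is MRD if and only if the associated matrix
rank-metric code `Γ(C)` is MRD. -/
theorem stmt8 {Fq Fqm : Type*} [Field Fq] [Fintype Fq] [Field Fqm] [Algebra Fq Fqm]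
    {n m : ℕ} (hn : 0 < n) (hnm : n ≤ m) (Γ : Module.Basis (Fin m) Fq Fqm)
    (C : Submodule Fqm (Fin n → Fqm)) :
    ((Module.finrank Fqm C : ℤ) = (n : ℤ) - (dminVec Fq C : ℤ) + 1) ↔
      ((Module.finrank Fq (Submodule.map (gammaLin Γ) (C.restrictScalars Fq)) : ℤ) =
        (m : ℤ) * ((n : ℤ) -
          (dminMat (Submodule.map (gammaLin Γ) (C.restrictScalars Fq)) : ℤ) + 1)) := by
  haveI : Module.Finite Fq Fqm := Module.Finite.of_basis Γ
  set D := Submodule.map (gammaLin Γ) (C.restrictScalars Fq) with hDdef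
  have hinj : Function.Injective (gammaLin (n := n) Γ) := gammaLin_injective Γ
  have hfm : Module.finrank Fq Fqm = m := by
    rw [Module.finrank_eq_card_basis Γ, Fintype.card_fin]
  by_cases hC : C = ⊥
  · have hD : D = ⊥ := by
      rw [hDdef, hC]
      simp
    rw [dminVec, if_pos hC, dminMat, if_pos hD, hC, hD]
    simp only [finrank_bot, Nat.cast_zero, min_eq_right hnm]
    push_cast
    constructor <;> intro <;> ring
  · have hD : D ≠ ⊥ := by
      intro h
      apply hC
      rw [← Submodule.restrictScalars_eq_bot_iff (S := Fq), eq_bot_iff]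
      intro x hx
      have hx' : gammaLin Γ x ∈ D := Submodule.mem_map_of_mem hx
      rw [h, Submodule.mem_bot] at hx'
      have : x = 0 := hinj (by rw [hx', map_zero])
      simp [this]
    have hdim : Module.finrank Fq D = m * Module.finrank Fqm C := by
      calc Module.finrank Fq D
          = Module.finrank Fq (C.restrictScalars Fq) :=
            (Submodule.equivMapOfInjective _ hinj _).symm.finrank_eq
        _ = Module.finrank Fq C := ((Submodule.restrictScalarsEquiv Fq Fqm _ C).restrictScalars Fq).finrank_eq
        _ = Module.finrank Fq Fqm * Module.finrank Fqm C :=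
            (Module.finrank_mul_finrank Fq Fqm C).symm
        _ = m * Module.finrank Fqm C := by rw [hfm]
    have hdmin : dminMat D = dminVec Fq C := by
      rw [dminVec, if_neg hC, dminMat, if_neg hD]
      congr 1
      ext r
      constructor
      · rintro ⟨M, hM, hM0, rfl⟩
        obtain ⟨v, hv, rfl⟩ := Submodule.mem_map.mp hM
        refine ⟨v, hv, ?_, (rank_gammaLin Γ v).symm⟩
        intro h
        exact hM0 (by rw [h, map_zero])
      · rintro ⟨v, hv, hv0, rfl⟩
        refine ⟨gammaLin Γ v, Submodule.mem_map.mpr ⟨v, hv, rfl⟩, ?_, rank_gammaLin Γ v⟩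
        intro h
        exact hv0 (hinj (by rw [h, map_zero]))
    rw [hdmin, hdim]
    have hm0 : (m : ℤ) ≠ 0 := by
      have : 0 < m := lt_of_lt_of_le hn hnm
      exact_mod_cast this.ne'
    push_cast
    constructor
    · intro h; rw [h]
    · intro h
      exact mul_left_cancel₀ hm0 h
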